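/- Let P₁ and P₂ be finite partially ordered sets, let r ∈ ℕ, and let T ∈ ℝ^{P₁×P₂} be any matrix. Then there exists θ* in the set N_{≤r} = { ∑_{i=1}^r a_i b_iᵀ : a_i ∈ C(P₁), b_i ∈ C(P₂) } such that ‖T − θ*‖_F ≤ ‖T − θ‖_F for all θ ∈ N_{≤r}, where ‖·‖_F denotes the Frobenius norm. -/

import Mathlib

/-- The order cone of a finite poset: nonnegative, nondecreasing real-valued functions. -/
def orderCone (P : Type*) [PartialOrder P] : Set (P → ℝ) :=
  {f | (∀ x, 0 ≤ f x) ∧ ∀ ⦃x y : P⦄, x ≤ y → f x ≤ f y}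

/-- The Frobenius norm of a matrix. -/
noncomputable def frobNorm {P₁ P₂ : Type*} [Fintype P₁] [Fintype P₂]
    (M : P₁ → P₂ → ℝ) : ℝ :=
  Real.sqrt (∑ x : P₁, ∑ y : P₂, (M x y) ^ 2)

lemma abs_le_frobNorm {P₁ P₂ : Type*} [Fintype P₁] [Fintype P₂]
    (M : P₁ → P₂ → ℝ) (x : P₁) (y : P₂) : |M x y| ≤ frobNorm M := by
  rw [frobNorm, ← Real.sqrt_sq_eq_abs]
  apply Real.sqrt_le_sqrt
  calc M x y ^ 2 ≤ ∑ y', M x y' ^ 2 :=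
        Finset.single_le_sum (f := fun y' => M x y' ^ 2)
          (fun _ _ => sq_nonneg _) (Finset.mem_univ y)
    _ ≤ ∑ x', ∑ y', M x' y' ^ 2 :=
        Finset.single_le_sum (f := fun x' => ∑ y', M x' y' ^ 2)
          (fun _ _ => Finset.sum_nonneg fun _ _ => sq_nonneg _) (Finset.mem_univ x)

/-- for any matrix `T`, a best Frobenius-norm approximation from the set of
matrices with ND rank at most `r` exists. -/
theorem exists_best_NDrank_le_r_approximation
    (P₁ P₂ : Type*) [Fintype P₁] [Fintype P₂] [PartialOrder P₁] [PartialOrder P₂]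
    (r : ℕ) (T : P₁ → P₂ → ℝ) :
    ∃ θstar ∈ {θ : P₁ → P₂ → ℝ | ∃ (a : Fin r → P₁ → ℝ) (b : Fin r → P₂ → ℝ),
        (∀ i, a i ∈ orderCone P₁) ∧ (∀ i, b i ∈ orderCone P₂) ∧
        ∀ x y, θ x y = ∑ i, a i x * b i y},
      ∀ θ ∈ {θ : P₁ → P₂ → ℝ | ∃ (a : Fin r → P₁ → ℝ) (b : Fin r → P₂ → ℝ),
        (∀ i, a i ∈ orderCone P₁) ∧ (∀ i, b i ∈ orderCone P₂) ∧
        ∀ x y, θ x y = ∑ i, a i x * b i y},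
      frobNorm (fun x y => T x y - θstar x y) ≤ frobNorm (fun x y => T x y - θ x y) := by
  have hzero_cone₁ : (0 : P₁ → ℝ) ∈ orderCone P₁ :=
    ⟨fun _ => le_refl 0, fun _ _ _ => le_refl 0⟩
  have hzero_cone₂ : (0 : P₂ → ℝ) ∈ orderCone P₂ :=
    ⟨fun _ => le_refl 0, fun _ _ _ => le_refl 0⟩
  -- degenerate cases: one of the posets is empty
  rcases isEmpty_or_nonempty P₁ with h₁ | h₁
  · refine ⟨fun _ _ => 0, ⟨fun _ => 0, fun _ => 0, fun _ => hzero_cone₁, fun _ => hzero_cone₂,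
      fun x y => by simp⟩, fun θ _ => ?_⟩
    have : (∑ x : P₁, ∑ y : P₂, (T x y - 0) ^ 2) = 0 := by simp
    rw [frobNorm, this, Real.sqrt_zero]
    exact Real.sqrt_nonneg _
  rcases isEmpty_or_nonempty P₂ with h₂ | h₂
  · refine ⟨fun _ _ => 0, ⟨fun _ => 0, fun _ => 0, fun _ => hzero_cone₁, fun _ => hzero_cone₂,
      fun x y => by simp⟩, fun θ _ => ?_⟩
    have : (∑ x : P₁, ∑ y : P₂, (T x y - 0) ^ 2) = 0 := by simp
    rw [frobNorm, this, Real.sqrt_zero]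
    exact Real.sqrt_nonneg _
  -- main case
  set B : ℝ := 2 * frobNorm T with hB
  have hT0 : 0 ≤ frobNorm T := Real.sqrt_nonneg _
  have hB0 : 0 ≤ B := by positivity
  -- the compact parameter set
  set K : Set ((Fin r → P₁ → ℝ) × (Fin r → P₂ → ℝ)) :=
    {p | (∀ i, p.1 i ∈ orderCone P₁) ∧ (∀ i, p.2 i ∈ orderCone P₂) ∧
      (∀ i x, p.1 i x ≤ 1) ∧ (∀ i y, p.2 i y ≤ B)} with hKdef
  have hKclosed : IsClosed K := by
    have hK_eq : K =
        (⋂ (i : Fin r) (x : P₁),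
          {p : (Fin r → P₁ → ℝ) × (Fin r → P₂ → ℝ) | 0 ≤ p.1 i x}) ∩
        (⋂ (i : Fin r) (x : P₁) (y : P₁) (_ : x ≤ y), {p | p.1 i x ≤ p.1 i y}) ∩
        (⋂ (i : Fin r) (y : P₂), {p | 0 ≤ p.2 i y}) ∩
        (⋂ (i : Fin r) (x : P₂) (y : P₂) (_ : x ≤ y), {p | p.2 i x ≤ p.2 i y}) ∩
        (⋂ (i : Fin r) (x : P₁), {p | p.1 i x ≤ 1}) ∩
        (⋂ (i : Fin r) (y : P₂), {p | p.2 i y ≤ B}) := by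
      ext p
      simp only [hKdef, Set.mem_setOf_eq, Set.mem_inter_iff, Set.mem_iInter, orderCone]
      constructor
      · rintro ⟨h1, h2, h3, h4⟩
        exact ⟨⟨⟨⟨⟨fun i x => (h1 i).1 x, fun i x y hxy => (h1 i).2 hxy⟩,
          fun i y => (h2 i).1 y⟩, fun i x y hxy => (h2 i).2 hxy⟩, h3⟩, h4⟩
      · rintro ⟨⟨⟨⟨⟨h1a, h1b⟩, h2a⟩, h2b⟩, h3⟩, h4⟩
        exact ⟨fun i => ⟨h1a i, fun x y hxy => h1b i x y hxy⟩,
          fun i => ⟨h2a i, fun x y hxy => h2b i x y hxy⟩, h3, h4⟩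
    rw [hK_eq]
    have c1 : ∀ (i : Fin r) (x : P₁),
        Continuous fun p : (Fin r → P₁ → ℝ) × (Fin r → P₂ → ℝ) => p.1 i x :=
      fun i x => (continuous_apply x).comp ((continuous_apply i).comp continuous_fst)
    have c2 : ∀ (i : Fin r) (y : P₂),
        Continuous fun p : (Fin r → P₁ → ℝ) × (Fin r → P₂ → ℝ) => p.2 i y :=
      fun i y => (continuous_apply y).comp ((continuous_apply i).comp continuous_snd)
    refine IsClosed.inter (IsClosed.inter (IsClosed.inter (IsClosed.inter
      (IsClosed.inter ?_ ?_) ?_) ?_) ?_) ?_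
    · exact isClosed_iInter fun i => isClosed_iInter fun x =>
        isClosed_le continuous_const (c1 i x)
    · exact isClosed_iInter fun i => isClosed_iInter fun x => isClosed_iInter fun y =>
        isClosed_iInter fun _ => isClosed_le (c1 i x) (c1 i y)
    · exact isClosed_iInter fun i => isClosed_iInter fun y =>
        isClosed_le continuous_const (c2 i y)
    · exact isClosed_iInter fun i => isClosed_iInter fun x => isClosed_iInter fun y =>
        isClosed_iInter fun _ => isClosed_le (c2 i x) (c2 i y)
    · exact isClosed_iInter fun i => isClosed_iInter fun x =>
        isClosed_le (c1 i x) continuous_const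
    · exact isClosed_iInter fun i => isClosed_iInter fun y =>
        isClosed_le (c2 i y) continuous_const
  have hKsub : K ⊆ Set.Icc (0, 0)
      ((fun _ _ => 1, fun _ _ => B) : (Fin r → P₁ → ℝ) × (Fin r → P₂ → ℝ)) := by
    rintro p ⟨h1, h2, h3, h4⟩
    refine ⟨⟨fun i => fun x => (h1 i).1 x, fun i => fun y => (h2 i).1 y⟩,
      ⟨fun i => fun x => h3 i x, fun i => fun y => h4 i y⟩⟩
  have hKcompact : IsCompact K := IsCompact.of_isClosed_subset isCompact_Icc hKclosed hKsub
  have hK0 : ((0, 0) : (Fin r → P₁ → ℝ) × (Fin r → P₂ → ℝ)) ∈ K :=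
    ⟨fun _ => hzero_cone₁, fun _ => hzero_cone₂, fun _ _ => zero_le_one, fun _ _ => hB0⟩
  -- the objective: squared Frobenius distance
  set g : (Fin r → P₁ → ℝ) × (Fin r → P₂ → ℝ) → ℝ :=
    fun p => ∑ x : P₁, ∑ y : P₂, (T x y - ∑ i, p.1 i x * p.2 i y) ^ 2 with hgdef
  have hgcont : Continuous g := by
    apply continuous_finset_sum; intro x _
    apply continuous_finset_sum; intro y _
    apply Continuous.pow
    apply Continuous.sub continuous_const
    apply continuous_finset_sum; intro i _
    fun_prop
  obtain ⟨p, hpK, hpmin⟩ := hKcompact.exists_isMinOn ⟨(0, 0), hK0⟩ hgcont.continuousOn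
  obtain ⟨hp1, hp2, hp3, hp4⟩ := hpK
  refine ⟨fun x y => ∑ i, p.1 i x * p.2 i y,
    ⟨p.1, p.2, hp1, hp2, fun _ _ => rfl⟩, ?_⟩
  rintro θ ⟨a, b, ha, hb, hθ⟩
  -- it suffices to compare squared sums
  have key : g p ≤ ∑ x : P₁, ∑ y : P₂, (T x y - θ x y) ^ 2 := by
    rcases le_total (∑ x : P₁, ∑ y : P₂, (T x y) ^ 2)
      (∑ x : P₁, ∑ y : P₂, (T x y - θ x y) ^ 2) with hle | hle
    · -- the zero matrix already does better
      have : g (0, 0) = ∑ x : P₁, ∑ y : P₂, (T x y) ^ 2 := by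
        simp [hgdef]
      calc g p ≤ g (0, 0) := hpmin hK0
        _ = _ := this
        _ ≤ _ := hle
    · -- θ is entrywise bounded, so it has a normalized representation inside K
      have hfrob_le : frobNorm (fun x y => T x y - θ x y) ≤ frobNorm T :=
        Real.sqrt_le_sqrt hle
      have hθ_nonneg : ∀ x y, 0 ≤ θ x y := by
        intro x y
        rw [hθ]
        exact Finset.sum_nonneg fun i _ => mul_nonneg ((ha i).1 x) ((hb i).1 y)
      have hθ_le : ∀ x y, θ x y ≤ B := by
        intro x y
        have h1 : |T x y| ≤ frobNorm T := abs_le_frobNorm T x y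
        have h2 : |T x y - θ x y| ≤ frobNorm T :=
          le_trans (abs_le_frobNorm (fun x y => T x y - θ x y) x y) hfrob_le
        have : θ x y = T x y - (T x y - θ x y) := by ring
        rw [this, hB]
        calc T x y - (T x y - θ x y) ≤ |T x y| + |T x y - θ x y| := by
              have := abs_sub_abs_le_abs_sub (T x y) (T x y - θ x y)
              have h3 : T x y ≤ |T x y| := le_abs_self _
              have h4 : -(T x y - θ x y) ≤ |T x y - θ x y| := neg_le_abs _
              linarith
          _ ≤ 2 * frobNorm T := by linarith
      -- normalization
      set s : Fin r → ℝ := fun i => Finset.univ.sup' Finset.univ_nonempty (a i) with hsdef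
      have hs_ge : ∀ i x, a i x ≤ s i := fun i x => Finset.le_sup' (a i) (Finset.mem_univ x)
      have hs_wit : ∀ i, ∃ x, s i = a i x := by
        intro i
        obtain ⟨x, _, hx⟩ := Finset.exists_mem_eq_sup' (Finset.univ_nonempty (α := P₁)) (a i)
        exact ⟨x, hx⟩
      have hs_nonneg : ∀ i, 0 ≤ s i := by
        intro i
        obtain ⟨x, hx⟩ := hs_wit i
        rw [hx]; exact (ha i).1 x
      set a' : Fin r → P₁ → ℝ := fun i x => a i x / s i with ha'def
      set b' : Fin r → P₂ → ℝ := fun i y => s i * b i y with hb'def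
      have hprod : ∀ i x y, a' i x * b' i y = a i x * b i y := by
        intro i x y
        rcases eq_or_lt_of_le (hs_nonneg i) with hs0 | hs0
        · have hax : a i x = 0 :=
            le_antisymm (le_trans (hs_ge i x) (by rw [← hs0])) ((ha i).1 x)
          simp [ha'def, hb'def, hax, ← hs0]
        · simp only [ha'def, hb'def]
          rw [div_mul_eq_mul_div, div_eq_iff (ne_of_gt hs0)]
          ring
      have hmem : (a', b') ∈ K := by
        refine ⟨fun i => ⟨fun x => div_nonneg ((ha i).1 x) (hs_nonneg i), ?_⟩,
          fun i => ⟨fun y => mul_nonneg (hs_nonneg i) ((hb i).1 y), ?_⟩, ?_, ?_⟩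
        · intro x y hxy
          rcases eq_or_lt_of_le (hs_nonneg i) with hs0 | hs0
          · simp [ha'def, ← hs0]
          · exact div_le_div_of_nonneg_right ((ha i).2 hxy) hs0.le
        · intro x y hxy
          exact mul_le_mul_of_nonneg_left ((hb i).2 hxy) (hs_nonneg i)
        · intro i x
          rcases eq_or_lt_of_le (hs_nonneg i) with hs0 | hs0
          · simp [ha'def, ← hs0]
          · exact (div_le_one hs0).mpr (hs_ge i x)
        · intro i y
          obtain ⟨x, hx⟩ := hs_wit i
          have : s i * b i y = a i x * b i y := by rw [hx]
          rw [hb'def]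
          simp only []
          rw [this]
          calc a i x * b i y ≤ ∑ j, a j x * b j y :=
                Finset.single_le_sum
                  (fun j _ => mul_nonneg ((ha j).1 x) ((hb j).1 y)) (Finset.mem_univ i)
            _ = θ x y := (hθ x y).symm
            _ ≤ B := hθ_le x y
      have : g (a', b') = ∑ x : P₁, ∑ y : P₂, (T x y - θ x y) ^ 2 := by
        simp only [hgdef]
        congr 1
        funext x
        congr 1
        funext y
        congr 2
        rw [hθ]
        exact Finset.sum_congr rfl fun i _ => hprod i x y
      calc g p ≤ g (a', b') := hpmin hmem
        _ = _ := this
  exact Real.sqrt_le_sqrt key
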